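/- Let B = (b₁,…,bₙ) ∈ ℝ^{d×n} be an LLL-reduced basis with Gram–Schmidt orthogonalization b̃₁,…,b̃ₙ, let γ ≥ 2 be real, define α₁ := 1 and αᵢ := max{α_{i−1}, ⌈‖b̃ᵢ‖/(γ^i·‖b₁‖)⌉} for 2 ≤ i ≤ n, and let A : ℝ^d → ℝ^d be the linear map with A b̃ᵢ = b̃ᵢ/αᵢ for all i and A y = y for all y orthogonal to span(b₁,…,bₙ). Then B'' := (A b₁,…,A bₙ) is an LLL-reduced basis and for all i, ‖b''₁‖/2^n ≤ ‖b̃''ᵢ‖ ≤ ‖b''ᵢ‖ ≤ (2γ)^i·‖b''₁‖, where b̃''ᵢ denotes the i-th Gram–Schmidt vector of B''. -/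

import Mathlib

open scoped RealInnerProductSpace BigOperators

noncomputable section

/-- The set of integer linear combinations of `B 0, …, B (n-1)`. -/
def zspan {d n : ℕ} (B : Fin n → EuclideanSpace ℝ (Fin d)) : Set (EuclideanSpace ℝ (Fin d)) :=
  {x | ∃ c : Fin n → ℤ, x = ∑ i, (c i : ℝ) • B i}

/-- `L` is a lattice of rank `n`: the ℤ-span of `n` ℝ-linearly independent vectors. -/
def IsLattice {d : ℕ} (L : Set (EuclideanSpace ℝ (Fin d))) (n : ℕ) : Prop :=
  ∃ B : Fin n → EuclideanSpace ℝ (Fin d), LinearIndependent ℝ B ∧ L = zspan B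

/-- The dual set `S* := {w ∈ span_ℝ S : ⟨w,y⟩ ∈ ℤ for all y ∈ S}`. -/
def dualSet {d : ℕ} (S : Set (EuclideanSpace ℝ (Fin d))) : Set (EuclideanSpace ℝ (Fin d)) :=
  {w | w ∈ Submodule.span ℝ S ∧ ∀ y ∈ S, ∃ m : ℤ, ⟪w, y⟫ = (m : ℝ)}

/-- Orthogonal projection onto the orthogonal complement of `span_ℝ S`. -/
def projPerp {d : ℕ} (S : Set (EuclideanSpace ℝ (Fin d))) (x : EuclideanSpace ℝ (Fin d)) : EuclideanSpace ℝ (Fin d) :=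
  (Submodule.orthogonalProjectionOnto (Submodule.span ℝ S)ᗮ x : EuclideanSpace ℝ (Fin d))

/-- `det(ℒ) = √(det(BᵀB))`, computed from a basis `B` via its Gram matrix. -/
def gramDet {d n : ℕ} (B : Fin n → EuclideanSpace ℝ (Fin d)) : ℝ :=
  Real.sqrt (Matrix.det (Matrix.of fun i j => ⟪B i, B j⟫))

/-- The Gram–Schmidt orthogonalization `b̃ᵢ = Π_{{b₁,…,b_(i-1)}^⊥}(bᵢ)`. -/
def gsVec {d n : ℕ} (B : Fin n → EuclideanSpace ℝ (Fin d)) (i : Fin n) : EuclideanSpace ℝ (Fin d) :=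
  projPerp (B '' {j | j < i}) (B i)

/-- The Gram–Schmidt coefficients `μ_(i,j) = ⟨b̃ᵢ, bⱼ⟩ / ‖b̃ᵢ‖²`. -/
def mu {d n : ℕ} (B : Fin n → EuclideanSpace ℝ (Fin d)) (i j : Fin n) : ℝ :=
  ⟪gsVec B i, B j⟫ / ‖gsVec B i‖ ^ 2

/-- `B` is an LLL-reduced basis (with parameter δ = 3/4). -/
def IsLLLReduced {d n : ℕ} (B : Fin n → EuclideanSpace ℝ (Fin d)) : Prop :=
  LinearIndependent ℝ B ∧
  (∀ i j : Fin n, i < j → |mu B i j| ≤ 1 / 2) ∧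
  (∀ (i : ℕ) (h : i + 1 < n),
    (3 / 4) * ‖gsVec B ⟨i, Nat.lt_of_succ_lt h⟩‖ ^ 2 ≤
      ‖gsVec B ⟨i + 1, h⟩‖ ^ 2 +
        (mu B ⟨i, Nat.lt_of_succ_lt h⟩ ⟨i + 1, h⟩) ^ 2 * ‖gsVec B ⟨i, Nat.lt_of_succ_lt h⟩‖ ^ 2)

open InnerProductSpace

instance instWFFin (n : ℕ) : WellFoundedLT (Fin n) := inferInstanceAs (IsWellFounded (Fin n) (·<·))

section helpers
variable {d n : ℕ}

lemma mem_orthogonal_span {S : Set (EuclideanSpace ℝ (Fin d))} {x : EuclideanSpace ℝ (Fin d)}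
    (h : ∀ y ∈ S, ⟪y, x⟫ = 0) : x ∈ (Submodule.span ℝ S)ᗮ := by
  rw [Submodule.mem_orthogonal]
  intro u hu
  induction hu using Submodule.span_induction with
  | mem y hy => exact h y hy
  | zero => exact inner_zero_left x
  | add a b _ _ ha hb => rw [inner_add_left, ha, hb, add_zero]
  | smul c a _ ha => rw [real_inner_smul_left, ha, mul_zero]

lemma projPerp_eq {S : Set (EuclideanSpace ℝ (Fin d))} {x v : EuclideanSpace ℝ (Fin d)}
    (hv : v ∈ (Submodule.span ℝ S)ᗮ) (hw : x - v ∈ Submodule.span ℝ S) : projPerp S x = v :=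
  Submodule.eq_starProjection_of_mem_orthogonal hv
    (Submodule.le_orthogonal_orthogonal _ hw)

lemma gsVec_eq_gramSchmidt (B : Fin n → EuclideanSpace ℝ (Fin d)) (i : Fin n) :
    gsVec B i = gramSchmidt ℝ B i := by
  apply projPerp_eq
  · apply mem_orthogonal_span
    rintro y ⟨j, hj, rfl⟩
    rw [real_inner_comm]
    exact gramSchmidt_inv_triangular ℝ B hj
  · have h := gramSchmidt_def ℝ B i
    have : B i - gramSchmidt ℝ B i = ∑ k ∈ Finset.Iio i, (ℝ ∙ gramSchmidt ℝ B k).starProjection (B i) := by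
      rw [h]; abel
    rw [this]
    have hsp : Submodule.span ℝ (B '' {j | j < i}) = Submodule.span ℝ (gramSchmidt ℝ B '' Set.Iio i) := by
      rw [span_gramSchmidt_Iio]; rfl
    rw [hsp]
    refine Submodule.sum_mem _ fun k hk => ?_
    have : (ℝ ∙ gramSchmidt ℝ B k) ≤ Submodule.span ℝ (gramSchmidt ℝ B '' Set.Iio i) := by
      rw [Submodule.span_singleton_le_iff_mem]
      exact Submodule.subset_span ⟨k, Finset.mem_Iio.mp hk, rfl⟩
    exact this (Submodule.orthogonalProjectionOnto (ℝ ∙ gramSchmidt ℝ B k) (B i)).2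

lemma B_decomp (B : Fin n → EuclideanSpace ℝ (Fin d)) (i : Fin n) :
    B i = gramSchmidt ℝ B i + ∑ k ∈ Finset.Iio i, mu B k i • gramSchmidt ℝ B k := by
  have h := gramSchmidt_def'' ℝ B i
  convert h using 3 with k hk
  rw [mu, gsVec_eq_gramSchmidt]
  norm_num

end helpers

set_option maxHeartbeats 1000000 in
theorem stmt18 {d n : ℕ} (hn : 0 < n) (B : Fin n → EuclideanSpace ℝ (Fin d))
    (hB : IsLLLReduced B) (γ : ℝ) (hγ : 2 ≤ γ)
    (α : Fin n → ℝ) (hα0 : α ⟨0, hn⟩ = 1)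
    (hαrec : ∀ (i : ℕ) (h : i + 1 < n),
      α ⟨i + 1, h⟩ = max (α ⟨i, Nat.lt_of_succ_lt h⟩)
        ((⌈‖gsVec B ⟨i + 1, h⟩‖ / (γ ^ (i + 2) * ‖B ⟨0, hn⟩‖)⌉ : ℤ) : ℝ))
    (A : EuclideanSpace ℝ (Fin d) →ₗ[ℝ] EuclideanSpace ℝ (Fin d))
    (hA1 : ∀ i : Fin n, A (gsVec B i) = (α i)⁻¹ • gsVec B i)
    (hA2 : ∀ y ∈ (Submodule.span ℝ (Set.range B))ᗮ, A y = y) :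
    IsLLLReduced (fun j => A (B j)) ∧
    ∀ i : Fin n,
      ‖A (B ⟨0, hn⟩)‖ / 2 ^ n ≤ ‖gsVec (fun j => A (B j)) i‖ ∧
      ‖gsVec (fun j => A (B j)) i‖ ≤ ‖A (B i)‖ ∧
      ‖A (B i)‖ ≤ (2 * γ) ^ ((i : ℕ) + 1) * ‖A (B ⟨0, hn⟩)‖ := by
  obtain ⟨hli, hmu, hlov⟩ := hB
  set g : Fin n → EuclideanSpace ℝ (Fin d) := gramSchmidt ℝ B with hgdef
  set B' : Fin n → EuclideanSpace ℝ (Fin d) := fun j => A (B j) with hB'def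
  have hgs_eq : ∀ i, gsVec B i = g i := fun i => gsVec_eq_gramSchmidt B i
  have hgne : ∀ i, g i ≠ 0 := fun i => gramSchmidt_ne_zero i hli
  have hgpos : ∀ i, 0 < ‖g i‖ := fun i => norm_pos_iff.mpr (hgne i)
  have hB0pos : 0 < ‖B ⟨0, hn⟩‖ := norm_pos_iff.mpr (hli.ne_zero _)
  have hγ0 : (0:ℝ) < γ := lt_of_lt_of_le two_pos hγ
  -- α basic facts
  have hα1' : ∀ (k : ℕ) (hk : k < n), 1 ≤ α ⟨k, hk⟩ := by
    intro k
    induction k with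
    | zero => intro hk; exact le_of_eq hα0.symm
    | succ k ih =>
      intro hk
      rw [hαrec k hk]
      exact le_trans (ih (Nat.lt_of_succ_lt hk)) (le_max_left _ _)
  have hα1 : ∀ i : Fin n, 1 ≤ α i := fun i => hα1' i.1 i.2
  have hαpos : ∀ i : Fin n, 0 < α i := fun i => lt_of_lt_of_le one_pos (hα1 i)
  -- Gram-Schmidt vector at 0
  have hg0 : g ⟨0, hn⟩ = B ⟨0, hn⟩ := by
    rw [← hgs_eq]
    apply projPerp_eq
    · apply mem_orthogonal_span
      rintro y ⟨j, hj, rfl⟩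
      exact absurd hj (by simp [Fin.lt_def])
    · simp
  -- upper bound on ‖g i‖
  have hαub : ∀ i : Fin n, ‖g i‖ ≤ γ ^ ((i:ℕ) + 1) * ‖B ⟨0, hn⟩‖ * α i := by
    rintro ⟨k, hk⟩
    match k with
    | 0 =>
      rw [hα0, hg0, mul_one, pow_one]
      nlinarith
    | (k+1) =>
      have h1 : (↑⌈‖g ⟨k+1, hk⟩‖ / (γ ^ (k + 2) * ‖B ⟨0, hn⟩‖)⌉ : ℝ) ≤ α ⟨k+1, hk⟩ := by
        rw [hαrec k hk, hgs_eq]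
        exact le_max_right _ _
      have h2 : ‖g ⟨k+1, hk⟩‖ / (γ ^ (k + 2) * ‖B ⟨0, hn⟩‖) ≤ α ⟨k+1, hk⟩ :=
        le_trans (Int.le_ceil _) h1
      have hc : 0 < γ ^ (k + 2) * ‖B ⟨0, hn⟩‖ := by positivity
      rw [div_le_iff₀ hc] at h2
      calc ‖g ⟨k+1, hk⟩‖ ≤ α ⟨k+1, hk⟩ * (γ ^ (k + 2) * ‖B ⟨0, hn⟩‖) := h2
        _ = γ ^ (k + 2) * ‖B ⟨0, hn⟩‖ * α ⟨k+1, hk⟩ := by ring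
  -- the key map facts
  have hA1g : ∀ i, A (g i) = (α i)⁻¹ • g i := by
    intro i; rw [← hgs_eq]; exact hA1 i
  have hAB : ∀ i, B' i = (α i)⁻¹ • g i + ∑ k ∈ Finset.Iio i, (mu B k i * (α k)⁻¹) • g k := by
    intro i
    have h0 : B' i = A (B i) := rfl
    conv_lhs => rw [h0, B_decomp B i]
    rw [map_add, map_sum, hA1g]
    congr 1
    refine Finset.sum_congr rfl fun k _ => ?_
    rw [map_smul, hA1g, smul_smul]
  -- membership facts
  have hmem1 : ∀ i, B' i ∈ Submodule.span ℝ (g '' Set.Iic i) := by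
    intro i
    rw [hAB i]
    refine Submodule.add_mem _ (Submodule.smul_mem _ _ (Submodule.subset_span ⟨i, Set.mem_Iic.mpr le_rfl, rfl⟩))
      (Submodule.sum_mem _ fun k hk => Submodule.smul_mem _ _ (Submodule.subset_span
        ⟨k, Set.mem_Iic.mpr (le_of_lt (Finset.mem_Iio.mp hk)), rfl⟩))
  have hgmem : ∀ i : Fin n, g i ∈ Submodule.span ℝ (B' '' Set.Iic i) := by
    have hcore : ∀ i : Fin n, (∀ k : Fin n, k < i → g k ∈ Submodule.span ℝ (B' '' Set.Iic k)) →
        g i ∈ Submodule.span ℝ (B' '' Set.Iic i) := by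
      intro i ih
      have h4 := hAB i
      have hgi : g i = (α i) • B' i - (α i) • ∑ k ∈ Finset.Iio i, (mu B k i * (α k)⁻¹) • g k := by
        rw [h4, smul_add, smul_smul, mul_inv_cancel₀ (hαpos i).ne', one_smul]
        abel
      rw [hgi]
      refine Submodule.sub_mem _
        (Submodule.smul_mem _ _ (Submodule.subset_span ⟨i, Set.mem_Iic.mpr le_rfl, rfl⟩))
        (Submodule.smul_mem _ _ (Submodule.sum_mem _ fun k hk => Submodule.smul_mem _ _ ?_))
      have hk' : k < i := Finset.mem_Iio.mp hk
      exact Submodule.span_mono (Set.image_mono (Set.Iic_subset_Iic.mpr hk'.le)) (ih k hk')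
    have key : ∀ (m : ℕ) (i : Fin n), (i:ℕ) < m → g i ∈ Submodule.span ℝ (B' '' Set.Iic i) := by
      intro m
      induction m with
      | zero => intro i him; omega
      | succ m ih =>
        intro i him
        exact hcore i fun k hk => ih k (by rw [Fin.lt_def] at hk; omega)
    exact fun i => key (n+1) i (by omega)
  -- span equality below any index
  have hspan : ∀ i : Fin n, Submodule.span ℝ (B' '' {j | j < i}) = Submodule.span ℝ (g '' {j | j < i}) := by
    intro i
    apply le_antisymm
    · rw [Submodule.span_le]
      rintro y ⟨k, hk, rfl⟩
      have hk' : k < i := hk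
      refine Submodule.span_mono (Set.image_mono ?_) (hmem1 k)
      intro j hj; exact lt_of_le_of_lt (Set.mem_Iic.mp hj) hk'
    · rw [Submodule.span_le]
      rintro y ⟨k, hk, rfl⟩
      have hk' : k < i := hk
      refine Submodule.span_mono (Set.image_mono ?_) (hgmem k)
      intro j hj; exact lt_of_le_of_lt (Set.mem_Iic.mp hj) hk'
  have horth : ∀ a b : Fin n, a ≠ b → ⟪g a, g b⟫ = 0 := fun a b h =>
    gramSchmidt_orthogonal ℝ B h
  -- Gram-Schmidt vectors of the new basis
  have hgs' : ∀ i : Fin n, gsVec B' i = (α i)⁻¹ • g i := by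
    intro i
    apply projPerp_eq
    · rw [hspan i]
      apply mem_orthogonal_span
      rintro y ⟨k, hk, rfl⟩
      rw [real_inner_smul_right, horth k i (ne_of_lt hk), mul_zero]
    · have : B' i - (α i)⁻¹ • g i = ∑ k ∈ Finset.Iio i, (mu B k i * (α k)⁻¹) • g k := by
        rw [hAB i]; abel
      rw [this, hspan i]
      exact Submodule.sum_mem _ fun k hk => Submodule.smul_mem _ _
        (Submodule.subset_span ⟨k, Finset.mem_Iio.mp hk, rfl⟩)
  have hgs'norm : ∀ i : Fin n, ‖gsVec B' i‖ = (α i)⁻¹ * ‖g i‖ := by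
    intro i
    rw [hgs' i, norm_smul, Real.norm_eq_abs, abs_of_pos (inv_pos.mpr (hαpos i))]
  -- linear independence of the new basis
  have hli' : LinearIndependent ℝ B' := by
    have hsp_range : Submodule.span ℝ (Set.range B') = Submodule.span ℝ (Set.range g) := by
      apply le_antisymm
      · rw [Submodule.span_le]
        rintro y ⟨k, rfl⟩
        exact Submodule.span_mono (Set.image_subset_range _ _) (hmem1 k)
      · rw [Submodule.span_le]
        rintro y ⟨k, rfl⟩
        exact Submodule.span_mono (Set.image_subset_range _ _) (hgmem k)
    have hgli : LinearIndependent ℝ g := gramSchmidt_linearIndependent hli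
    rw [linearIndependent_iff_card_eq_finrank_span]
    rw [linearIndependent_iff_card_eq_finrank_span] at hgli
    rw [Set.finrank] at hgli ⊢
    rw [hsp_range]
    exact hgli
  -- mu is preserved
  have hinner : ∀ k i : Fin n, k < i → ⟪g k, B' i⟫ = (mu B k i * (α k)⁻¹) * ‖g k‖^2 := by
    intro k i hk
    rw [hAB i, inner_add_right, real_inner_smul_right,
      horth k i (ne_of_lt hk), mul_zero, zero_add, inner_sum]
    rw [Finset.sum_eq_single_of_mem k (Finset.mem_Iio.mpr hk)]
    · rw [real_inner_smul_right, real_inner_self_eq_norm_sq]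
    · intro j hj hjk
      rw [real_inner_smul_right, horth k j (Ne.symm hjk), mul_zero]
  have hmu' : ∀ k i : Fin n, k < i → mu B' k i = mu B k i := by
    intro k i hk
    rw [mu, hgs' k, real_inner_smul_left, hinner k i hk, norm_smul, Real.norm_eq_abs,
      abs_of_pos (inv_pos.mpr (hαpos k))]
    have ha := (hαpos k).ne'
    have hgk := (hgpos k).ne'
    rw [mu, hgs_eq]
    field_simp
  -- Lovász single step for the original basis
  have hstep : ∀ (k : ℕ) (h : k + 1 < n),
      ‖g ⟨k, Nat.lt_of_succ_lt h⟩‖ ^ 2 / 2 ≤ ‖g ⟨k + 1, h⟩‖ ^ 2 := by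
    intro k h
    have h1 := hlov k h
    simp only [hgs_eq] at h1
    have h2 := hmu ⟨k, Nat.lt_of_succ_lt h⟩ ⟨k + 1, h⟩ (by simp [Fin.lt_def])
    have h3 : (mu B ⟨k, Nat.lt_of_succ_lt h⟩ ⟨k + 1, h⟩) ^ 2 ≤ 1 / 4 := by
      have := abs_nonneg (mu B ⟨k, Nat.lt_of_succ_lt h⟩ ⟨k + 1, h⟩)
      nlinarith [sq_abs (mu B ⟨k, Nat.lt_of_succ_lt h⟩ ⟨k + 1, h⟩)]
    nlinarith [sq_nonneg ‖g ⟨k, Nat.lt_of_succ_lt h⟩‖]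
  -- dichotomy for α
  have hcase : ∀ (k : ℕ) (h : k + 1 < n),
      α ⟨k + 1, h⟩ = α ⟨k, Nat.lt_of_succ_lt h⟩ ∨
      α ⟨k + 1, h⟩ * (γ ^ (k + 2) * ‖B ⟨0, hn⟩‖) < 2 * ‖g ⟨k + 1, h⟩‖ := by
    intro k h
    have hrec := hαrec k h
    simp only [hgs_eq] at hrec
    by_cases hcc : ((⌈‖g ⟨k + 1, h⟩‖ / (γ ^ (k + 2) * ‖B ⟨0, hn⟩‖)⌉ : ℤ) : ℝ) ≤ α ⟨k, Nat.lt_of_succ_lt h⟩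
    · left; rw [hrec, max_eq_left hcc]
    · right
      push_neg at hcc
      rw [hrec, max_eq_right (le_of_lt hcc)]
      set r : ℝ := ‖g ⟨k + 1, h⟩‖ / (γ ^ (k + 2) * ‖B ⟨0, hn⟩‖) with hrdef
      have h1 : (1:ℝ) < (⌈r⌉ : ℤ) := lt_of_le_of_lt (hα1 _) hcc
      have h2 : (1:ℤ) < ⌈r⌉ := by exact_mod_cast h1
      have h3 : (1:ℝ) < r := by exact_mod_cast Int.lt_ceil.mp h2
      have h4 : ((⌈r⌉ : ℤ) : ℝ) < r + 1 := Int.ceil_lt_add_one r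
      have hcpos : 0 < γ ^ (k + 2) * ‖B ⟨0, hn⟩‖ := by positivity
      have h5 : r * (γ ^ (k + 2) * ‖B ⟨0, hn⟩‖) = ‖g ⟨k + 1, h⟩‖ := div_mul_cancel₀ _ hcpos.ne'
      nlinarith [h4, h3, hcpos, h5]
  -- the lower-bound chain
  have Clow : ∀ (k : ℕ) (hk : k < n),
      ‖B ⟨0, hn⟩‖ ^ 2 ≤ 2 ^ k * ((α ⟨k, hk⟩)⁻¹ * ‖g ⟨k, hk⟩‖) ^ 2 := by
    intro k
    induction k with
    | zero =>
      intro hk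
      have e1 : α ⟨0, hk⟩ = 1 := hα0
      have e2 : g ⟨0, hk⟩ = B ⟨0, hn⟩ := hg0
      rw [e1, e2]; norm_num
    | succ k ih =>
      intro hk
      have hk' := Nat.lt_of_succ_lt hk
      have IH := ih hk'
      have hpw : (2:ℝ) ^ (k + 1) = 2 * 2 ^ k := by ring
      rcases hcase k hk with hc | hc
      · have hs := hstep k hk
        rw [hc, hpw]
        have h7 : ((α ⟨k, hk'⟩)⁻¹ * ‖g ⟨k, hk'⟩‖) ^ 2 ≤ 2 * ((α ⟨k, hk'⟩)⁻¹ * ‖g ⟨k + 1, hk⟩‖) ^ 2 := by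
          calc ((α ⟨k, hk'⟩)⁻¹ * ‖g ⟨k, hk'⟩‖) ^ 2 = ((α ⟨k, hk'⟩)⁻¹) ^ 2 * ‖g ⟨k, hk'⟩‖ ^ 2 := by ring
            _ ≤ ((α ⟨k, hk'⟩)⁻¹) ^ 2 * (2 * ‖g ⟨k + 1, hk⟩‖ ^ 2) :=
                mul_le_mul_of_nonneg_left (by linarith) (sq_nonneg _)
            _ = 2 * ((α ⟨k, hk'⟩)⁻¹ * ‖g ⟨k + 1, hk⟩‖) ^ 2 := by ring
        calc ‖B ⟨0, hn⟩‖ ^ 2 ≤ 2 ^ k * ((α ⟨k, hk'⟩)⁻¹ * ‖g ⟨k, hk'⟩‖) ^ 2 := IH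
          _ ≤ 2 ^ k * (2 * ((α ⟨k, hk'⟩)⁻¹ * ‖g ⟨k + 1, hk⟩‖) ^ 2) :=
              mul_le_mul_of_nonneg_left h7 (by positivity)
          _ = 2 * 2 ^ k * ((α ⟨k, hk'⟩)⁻¹ * ‖g ⟨k + 1, hk⟩‖) ^ 2 := by ring
      · have hb := hαpos ⟨k + 1, hk⟩
        have h6 := mul_lt_mul_of_pos_left hc (inv_pos.mpr hb)
        have hinv : (α ⟨k + 1, hk⟩)⁻¹ * α ⟨k + 1, hk⟩ = 1 := inv_mul_cancel₀ hb.ne'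
        have hγp : (2:ℝ) ≤ γ ^ (k + 2) := by
          calc (2:ℝ) = 2 ^ 1 := by norm_num
            _ ≤ 2 ^ (k + 2) := by
                apply pow_le_pow_right₀ (by norm_num) (by omega)
            _ ≤ γ ^ (k + 2) := by
                apply pow_le_pow_left₀ (by norm_num) hγ
        rw [← mul_assoc, hinv, one_mul] at h6
        have h9 : 2 * ‖B ⟨0, hn⟩‖ ≤ γ ^ (k + 2) * ‖B ⟨0, hn⟩‖ :=
          mul_le_mul_of_nonneg_right hγp (norm_nonneg _)
        have ht : ‖B ⟨0, hn⟩‖ < (α ⟨k + 1, hk⟩)⁻¹ * ‖g ⟨k + 1, hk⟩‖ := by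
          rw [mul_comm 2 ‖g ⟨k + 1, hk⟩‖, ← mul_assoc] at h6
          linarith
        have h1 : (1:ℝ) ≤ 2 ^ (k + 1) := one_le_pow₀ (by norm_num)
        calc ‖B ⟨0, hn⟩‖ ^ 2 ≤ ((α ⟨k + 1, hk⟩)⁻¹ * ‖g ⟨k + 1, hk⟩‖) ^ 2 :=
              pow_le_pow_left₀ (norm_nonneg _) (le_of_lt ht) 2
          _ = 1 * ((α ⟨k + 1, hk⟩)⁻¹ * ‖g ⟨k + 1, hk⟩‖) ^ 2 := (one_mul _).symm
          _ ≤ 2 ^ (k + 1) * ((α ⟨k + 1, hk⟩)⁻¹ * ‖g ⟨k + 1, hk⟩‖) ^ 2 :=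
              mul_le_mul_of_nonneg_right h1 (sq_nonneg _)
  constructor
  · -- the new basis is LLL reduced
    refine ⟨hli', ?_, ?_⟩
    · intro i j hij
      rw [show mu (fun j => A (B j)) i j = mu B' i j from rfl, hmu' i j hij]
      exact hmu i j hij
    · intro k h
      have hlt : (⟨k, Nat.lt_of_succ_lt h⟩ : Fin n) < ⟨k + 1, h⟩ := by simp [Fin.lt_def]
      have e1 : gsVec (fun j => A (B j)) ⟨k, Nat.lt_of_succ_lt h⟩ = gsVec B' ⟨k, Nat.lt_of_succ_lt h⟩ := rfl
      have e2 : gsVec (fun j => A (B j)) ⟨k + 1, h⟩ = gsVec B' ⟨k + 1, h⟩ := rfl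
      have e3 : mu (fun j => A (B j)) ⟨k, Nat.lt_of_succ_lt h⟩ ⟨k + 1, h⟩ = mu B' ⟨k, Nat.lt_of_succ_lt h⟩ ⟨k + 1, h⟩ := rfl
      rw [e1, e2, e3, hgs'norm, hgs'norm, hmu' _ _ hlt]
      have ho := hlov k h
      simp only [hgs_eq] at ho
      have ha := hαpos ⟨k, Nat.lt_of_succ_lt h⟩
      have hb := hαpos ⟨k + 1, h⟩
      rcases hcase k h with hc | hc
      · rw [hc]
        nlinarith [mul_le_mul_of_nonneg_left ho (sq_nonneg ((α ⟨k, Nat.lt_of_succ_lt h⟩)⁻¹))]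
      · -- here the scaled (k+1)-st GS vector is long
        have hub := hαub ⟨k, Nat.lt_of_succ_lt h⟩
        have e4 : ((⟨k, Nat.lt_of_succ_lt h⟩ : Fin n) : ℕ) = k := rfl
        rw [e4] at hub
        have hkey : (α ⟨k, Nat.lt_of_succ_lt h⟩)⁻¹ * ‖g ⟨k, Nat.lt_of_succ_lt h⟩‖ ≤
            (α ⟨k + 1, h⟩)⁻¹ * ‖g ⟨k + 1, h⟩‖ := by
          have e5 : (α ⟨k, Nat.lt_of_succ_lt h⟩)⁻¹ * ‖g ⟨k, Nat.lt_of_succ_lt h⟩‖ ≤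
              γ ^ (k + 1) * ‖B ⟨0, hn⟩‖ := by
            rw [inv_mul_le_iff₀ ha]
            calc ‖g ⟨k, Nat.lt_of_succ_lt h⟩‖ ≤ γ ^ (k + 1) * ‖B ⟨0, hn⟩‖ * α ⟨k, Nat.lt_of_succ_lt h⟩ := hub
              _ = α ⟨k, Nat.lt_of_succ_lt h⟩ * (γ ^ (k + 1) * ‖B ⟨0, hn⟩‖) := by ring
          have h6 := mul_lt_mul_of_pos_left hc (inv_pos.mpr hb)
          have hinv : (α ⟨k + 1, h⟩)⁻¹ * α ⟨k + 1, h⟩ = 1 := inv_mul_cancel₀ hb.ne'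
          have hγp1 : (0:ℝ) < γ ^ (k + 1) := pow_pos hγ0 _
          rw [← mul_assoc, hinv, one_mul] at h6
          have hgc : 0 < γ ^ (k + 1) * ‖B ⟨0, hn⟩‖ := mul_pos hγp1 hB0pos
          have h8 : 2 * (γ ^ (k + 1) * ‖B ⟨0, hn⟩‖) ≤ γ ^ (k + 2) * ‖B ⟨0, hn⟩‖ := by
            have hps : γ ^ (k + 2) = γ * γ ^ (k + 1) := by ring
            rw [hps]
            nlinarith [hγ, hgc]
          have e6 : γ ^ (k + 1) * ‖B ⟨0, hn⟩‖ ≤ (α ⟨k + 1, h⟩)⁻¹ * ‖g ⟨k + 1, h⟩‖ := by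
            nlinarith [h6, h8]
          linarith
        have hX : 0 ≤ (α ⟨k, Nat.lt_of_succ_lt h⟩)⁻¹ * ‖g ⟨k, Nat.lt_of_succ_lt h⟩‖ := by positivity
        nlinarith [mul_self_le_mul_self hX hkey,
          mul_nonneg (sq_nonneg (mu B ⟨k, Nat.lt_of_succ_lt h⟩ ⟨k + 1, h⟩))
            (sq_nonneg ((α ⟨k, Nat.lt_of_succ_lt h⟩)⁻¹ * ‖g ⟨k, Nat.lt_of_succ_lt h⟩‖))]
  · -- the norm bounds
    have hempty : Finset.Iio (⟨0, hn⟩ : Fin n) = ∅ := by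
      ext j; simp [Fin.lt_def]
    have hAB0 : B' ⟨0, hn⟩ = B ⟨0, hn⟩ := by
      rw [hAB ⟨0, hn⟩, hempty, Finset.sum_empty, add_zero, hα0, inv_one, one_smul, hg0]
    have hA0 : ‖A (B ⟨0, hn⟩)‖ = ‖B ⟨0, hn⟩‖ := by
      rw [show A (B ⟨0, hn⟩) = B' ⟨0, hn⟩ from rfl, hAB0]
    intro i
    refine ⟨?_, ?_, ?_⟩
    · -- lower bound
      show ‖A (B ⟨0, hn⟩)‖ / 2 ^ n ≤ ‖gsVec B' i‖
      rw [hA0, hgs'norm i, div_le_iff₀ (by positivity : (0:ℝ) < 2 ^ n)]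
      have hC := Clow i.1 i.2
      simp only [Fin.eta] at hC
      have h2i : (2:ℝ) ^ (i:ℕ) ≤ (2 ^ n) ^ 2 := by
        rw [← pow_mul]
        apply pow_le_pow_right₀ (by norm_num)
        omega
      have ht0 : 0 ≤ (α i)⁻¹ * ‖g i‖ := le_of_lt (mul_pos (inv_pos.mpr (hαpos i)) (hgpos i))
      have hsq : ‖B ⟨0, hn⟩‖ ^ 2 ≤ ((α i)⁻¹ * ‖g i‖ * 2 ^ n) ^ 2 := by
        nlinarith [hC, h2i, sq_nonneg ((α i)⁻¹ * ‖g i‖)]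
      have := Real.sqrt_le_sqrt hsq
      rw [Real.sqrt_sq (norm_nonneg _), Real.sqrt_sq (by positivity)] at this
      linarith
    · -- middle bound
      show ‖gsVec B' i‖ ≤ ‖A (B i)‖
      have hwdef : B' i = gsVec B' i + ∑ k ∈ Finset.Iio i, (mu B k i * (α k)⁻¹) • g k := by
        rw [hgs' i]; exact hAB i
      have hperp : ⟪gsVec B' i, ∑ k ∈ Finset.Iio i, (mu B k i * (α k)⁻¹) • g k⟫ = 0 := by
        rw [hgs' i, inner_sum]
        refine Finset.sum_eq_zero fun k hk => ?_
        rw [real_inner_smul_right, real_inner_smul_left,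
          horth i k (ne_of_gt (Finset.mem_Iio.mp hk))]
        ring
      have hns : ‖B' i‖ ^ 2 = ‖gsVec B' i‖ ^ 2 + ‖∑ k ∈ Finset.Iio i, (mu B k i * (α k)⁻¹) • g k‖ ^ 2 := by
        rw [hwdef, norm_add_sq_real, hperp]
        ring
      have hsq : ‖gsVec B' i‖ ^ 2 ≤ ‖B' i‖ ^ 2 := by
        rw [hns]; nlinarith [sq_nonneg ‖∑ k ∈ Finset.Iio i, (mu B k i * (α k)⁻¹) • g k‖]
      have := Real.sqrt_le_sqrt hsq
      rw [Real.sqrt_sq (norm_nonneg _), Real.sqrt_sq (norm_nonneg _)] at this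
      exact this
    · -- upper bound
      show ‖A (B i)‖ ≤ (2 * γ) ^ ((i:ℕ) + 1) * ‖A (B ⟨0, hn⟩)‖
      rw [hA0]
      have hterm : ∀ k : Fin n, k < i →
          ‖(mu B k i * (α k)⁻¹) • g k‖ ≤ 1 / 2 * (γ ^ ((i:ℕ) + 1) * ‖B ⟨0, hn⟩‖) := by
        intro k hk
        rw [norm_smul, Real.norm_eq_abs, abs_mul, abs_of_pos (inv_pos.mpr (hαpos k))]
        have h1 : |mu B k i| ≤ 1 / 2 := hmu k i hk
        have h2 : (α k)⁻¹ * ‖g k‖ ≤ γ ^ ((k:ℕ) + 1) * ‖B ⟨0, hn⟩‖ := by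
          rw [inv_mul_le_iff₀ (hαpos k)]
          calc ‖g k‖ ≤ γ ^ ((k:ℕ) + 1) * ‖B ⟨0, hn⟩‖ * α k := hαub k
            _ = α k * (γ ^ ((k:ℕ) + 1) * ‖B ⟨0, hn⟩‖) := by ring
        have h3 : γ ^ ((k:ℕ) + 1) * ‖B ⟨0, hn⟩‖ ≤ γ ^ ((i:ℕ) + 1) * ‖B ⟨0, hn⟩‖ := by
          apply mul_le_mul_of_nonneg_right _ (norm_nonneg _)
          apply pow_le_pow_right₀ (le_trans one_le_two hγ)
          have : (k:ℕ) < (i:ℕ) := hk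
          omega
        have h4 : 0 ≤ (α k)⁻¹ * ‖g k‖ := le_of_lt (mul_pos (inv_pos.mpr (hαpos k)) (hgpos k))
        rw [mul_assoc]
        calc |mu B k i| * ((α k)⁻¹ * ‖g k‖) ≤ 1 / 2 * ((α k)⁻¹ * ‖g k‖) :=
              mul_le_mul_of_nonneg_right h1 h4
          _ ≤ 1 / 2 * (γ ^ ((i:ℕ) + 1) * ‖B ⟨0, hn⟩‖) := by
              apply mul_le_mul_of_nonneg_left (le_trans h2 h3) (by norm_num)
      have hfirst : ‖(α i)⁻¹ • g i‖ ≤ γ ^ ((i:ℕ) + 1) * ‖B ⟨0, hn⟩‖ := by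
        rw [norm_smul, Real.norm_eq_abs, abs_of_pos (inv_pos.mpr (hαpos i)), inv_mul_le_iff₀ (hαpos i)]
        calc ‖g i‖ ≤ γ ^ ((i:ℕ) + 1) * ‖B ⟨0, hn⟩‖ * α i := hαub i
          _ = α i * (γ ^ ((i:ℕ) + 1) * ‖B ⟨0, hn⟩‖) := by ring
      have hsum : ‖∑ k ∈ Finset.Iio i, (mu B k i * (α k)⁻¹) • g k‖ ≤
          (i:ℕ) * (1 / 2 * (γ ^ ((i:ℕ) + 1) * ‖B ⟨0, hn⟩‖)) := by
        calc ‖∑ k ∈ Finset.Iio i, (mu B k i * (α k)⁻¹) • g k‖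
            ≤ ∑ k ∈ Finset.Iio i, ‖(mu B k i * (α k)⁻¹) • g k‖ := norm_sum_le _ _
          _ ≤ ∑ _k ∈ Finset.Iio i, 1 / 2 * (γ ^ ((i:ℕ) + 1) * ‖B ⟨0, hn⟩‖) :=
              Finset.sum_le_sum fun k hk => hterm k (Finset.mem_Iio.mp hk)
          _ = (Finset.Iio i).card * (1 / 2 * (γ ^ ((i:ℕ) + 1) * ‖B ⟨0, hn⟩‖)) := by
              rw [Finset.sum_const, nsmul_eq_mul]
          _ = (i:ℕ) * (1 / 2 * (γ ^ ((i:ℕ) + 1) * ‖B ⟨0, hn⟩‖)) := by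
              rw [Fin.card_Iio]
      have htri : ‖B' i‖ ≤ γ ^ ((i:ℕ) + 1) * ‖B ⟨0, hn⟩‖ +
          (i:ℕ) * (1 / 2 * (γ ^ ((i:ℕ) + 1) * ‖B ⟨0, hn⟩‖)) := by
        calc ‖B' i‖ = ‖(α i)⁻¹ • g i + ∑ k ∈ Finset.Iio i, (mu B k i * (α k)⁻¹) • g k‖ := by rw [hAB i]
          _ ≤ ‖(α i)⁻¹ • g i‖ + ‖∑ k ∈ Finset.Iio i, (mu B k i * (α k)⁻¹) • g k‖ := norm_add_le _ _
          _ ≤ _ := add_le_add hfirst hsum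
      have hcount : ((i:ℕ):ℝ) + 1 ≤ 2 ^ (i:ℕ) := by
        have := Nat.lt_two_pow_self (n := (i:ℕ))
        exact_mod_cast Nat.succ_le_of_lt this
      have hγc : (0:ℝ) < γ ^ ((i:ℕ) + 1) * ‖B ⟨0, hn⟩‖ := by positivity
      have hmp : (2 * γ) ^ ((i:ℕ) + 1) = 2 ^ ((i:ℕ) + 1) * γ ^ ((i:ℕ) + 1) := mul_pow 2 γ _
      rw [show ‖A (B i)‖ = ‖B' i‖ from rfl, hmp]
      have hpw2 : (2:ℝ) ^ ((i:ℕ) + 1) = 2 * 2 ^ (i:ℕ) := by ring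
      nlinarith [htri, mul_le_mul_of_nonneg_right hcount (le_of_lt hγc), hγc,
        mul_nonneg (Nat.cast_nonneg (i:ℕ) : (0:ℝ) ≤ (i:ℕ)) (le_of_lt hγc)]
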